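/- Let G be a Lie group and U ⊆ G an open connected subset with 1 ∈ U. Let z ∈ U and let a₁, …, aₙ ∈ U be invertible elements of U (i.e. aᵢ ∈ U and aᵢ⁻¹ ∈ U for each i). Then the U-word (z, a₁, …, aₙ, aₙ⁻¹, …, a₁⁻¹) can be transformed, using elementary expansions only, into a U-word of the form (b₁, …, b_m, b_m⁻¹, …, b₁⁻¹, z) where each bⱼ is an invertible element of U. -/

import Mathlib

/-- Elementary contraction of a word over `U`: two adjacent letters `a, b ∈ U` are replaced
by the single letter `a * b`, provided `a * b ∈ U`. -/
def Contracts {G : Type*} [Group G] (U : Set G) (w w' : List G) : Prop :=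
  ∃ (l₁ l₂ : List G) (a b : G), a ∈ U ∧ b ∈ U ∧ a * b ∈ U ∧
    w = l₁ ++ a :: b :: l₂ ∧ w' = l₁ ++ (a * b) :: l₂

/-- Elementary expansion: the inverse operation of contraction. -/
def Expands {G : Type*} [Group G] (U : Set G) (w w' : List G) : Prop :=
  Contracts U w' w

/-- The block `(a₁, …, aₙ, aₙ⁻¹, …, a₁⁻¹)` built from the list `a = [a₁, …, aₙ]`. -/
def Block {G : Type*} [Group G] (a : List G) : List G :=
  a ++ (a.reverse.map fun x => x⁻¹)

section Aux

variable {G : Type*} [Group G] {U : Set G}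

lemma contracts_append (l r : List G) {w w' : List G} (h : Contracts U w w') :
    Contracts U (l ++ w ++ r) (l ++ w' ++ r) := by
  obtain ⟨l₁, l₂, x, y, hx, hy, hxy, h1, h2⟩ := h
  exact ⟨l ++ l₁, l₂ ++ r, x, y, hx, hy, hxy, by simp [h1], by simp [h2]⟩

lemma expands_rtg_append (l r : List G) {w w' : List G}
    (h : Relation.ReflTransGen (Expands U) w w') :
    Relation.ReflTransGen (Expands U) (l ++ w ++ r) (l ++ w' ++ r) :=
  Relation.ReflTransGen.lift (r := Expands U) (p := Expands U) (fun x => l ++ x ++ r)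
    (fun _ _ hx => contracts_append l r hx) _ _ h

lemma expands_append_one (h1 : (1 : G) ∈ U) (l : List G) {x : G} (hx : x ∈ U) :
    Expands U (l ++ [x]) (l ++ [x, 1]) := by
  refine ⟨l, [], x, 1, hx, h1, by simpa using hx, rfl, by simp⟩

lemma expands_rtg_append_one (h1 : (1 : G) ∈ U) {w : List G}
    (hw : ∀ x ∈ w, x ∈ U) (hne : w ≠ []) :
    Relation.ReflTransGen (Expands U) w (w ++ [1]) := by
  rcases w.eq_nil_or_concat with h | ⟨l, x, rfl⟩
  · exact absurd h hne
  · refine Relation.ReflTransGen.single ?_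
    simpa [List.concat_eq_append] using
      (expands_append_one h1 l (hw x (by simp [List.concat_eq_append])))

/-- The key predicate: `z` can move past any block using expansions only. -/
def Moves (U : Set G) (z : G) : Prop :=
  ∀ a : List G, (∀ x ∈ a, x ∈ U ∧ x⁻¹ ∈ U) →
    ∃ b : List G, (∀ x ∈ b, x ∈ U ∧ x⁻¹ ∈ U) ∧
      Relation.ReflTransGen (Expands U) (z :: Block a) (Block b ++ [z])

lemma block_mem (ha : ∀ x ∈ a, x ∈ U ∧ x⁻¹ ∈ U) : ∀ x ∈ Block a, x ∈ U := by
  intro x hx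
  rcases List.mem_append.1 hx with h | h
  · exact (ha x h).1
  · obtain ⟨y, hy, rfl⟩ := List.mem_map.1 h
    exact (ha y (List.mem_reverse.1 hy)).2

lemma moves_one (h1 : (1 : G) ∈ U) : Moves U 1 := by
  intro a ha
  refine ⟨1 :: a, ?_, ?_⟩
  · intro x hx
    rcases List.mem_cons.1 hx with rfl | hx
    · exact ⟨h1, by simpa using h1⟩
    · exact ha x hx
  · have hmem : ∀ x ∈ (1 : G) :: Block a, x ∈ U := by
      intro x hx
      rcases List.mem_cons.1 hx with rfl | hx
      · exact h1
      · exact block_mem ha x hx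
    have s1 : Relation.ReflTransGen (Expands U) ((1 : G) :: Block a)
        (((1 : G) :: Block a) ++ [1]) :=
      expands_rtg_append_one h1 hmem (by simp)
    have s2 : Relation.ReflTransGen (Expands U) (((1 : G) :: Block a) ++ [1])
        ((((1 : G) :: Block a) ++ [1]) ++ [1]) := by
      refine expands_rtg_append_one h1 ?_ (by simp)
      intro x hx
      rcases List.mem_append.1 hx with hx | hx
      · exact hmem x hx
      · simpa using (by simpa using hx : x = 1) ▸ h1
    have heq : (((1 : G) :: Block a) ++ [1]) ++ [1] = Block ((1 : G) :: a) ++ [(1 : G)] := by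
      simp [Block]
    exact heq ▸ s1.trans s2

lemma moves_step {z v : G} (hz : z ∈ U) (hv : v ∈ U) (hv' : v⁻¹ ∈ U)
    (hvz : v * z ∈ U) (h : Moves U z) : Moves U (v * z) := by
  intro a ha
  obtain ⟨b, hb, hrel⟩ := h a ha
  refine ⟨v :: b, ?_, ?_⟩
  · intro x hx
    rcases List.mem_cons.1 hx with rfl | hx
    · exact ⟨hv, hv'⟩
    · exact hb x hx
  · have s1 : Expands U ((v * z) :: Block a) (v :: z :: Block a) :=
      ⟨[], Block a, v, z, hv, hz, hvz, rfl, rfl⟩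
    have s2 : Relation.ReflTransGen (Expands U) (v :: z :: Block a)
        (v :: (Block b ++ [z])) := by
      have := expands_rtg_append [v] [] hrel
      simpa using this
    have s3 : Expands U (v :: (Block b ++ [z])) ((v :: Block b) ++ [v⁻¹, v * z]) := by
      refine ⟨v :: Block b, [], v⁻¹, v * z, hv', hvz, ?_, rfl, ?_⟩
      · simpa [inv_mul_cancel_left] using hz
      · simp [inv_mul_cancel_left]
    have heq : (v :: Block b) ++ [v⁻¹, v * z] = Block (v :: b) ++ [v * z] := by
      simp [Block]
    exact heq ▸ ((Relation.ReflTransGen.single s1).trans s2).trans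
      (Relation.ReflTransGen.single s3)

end Aux

/-- **Moving a block past a letter using expansions only.**
Let `G` be a Lie group and `U ⊆ G` an open connected subset with `1 ∈ U`.  Let `z ∈ U` and
let `a₁, …, aₙ ∈ U` be invertible elements of `U`.  Then the word
`(z, a₁, …, aₙ, aₙ⁻¹, …, a₁⁻¹)` can be transformed, using elementary expansions only, into a
word of the form `(b₁, …, b_m, b_m⁻¹, …, b₁⁻¹, z)` with each `bⱼ` invertible in `U`. -/
theorem block_switch
    {E : Type*} [NormedAddCommGroup E] [NormedSpace ℝ E]
    {H : Type*} [TopologicalSpace H] (I : ModelWithCorners ℝ E H)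
    {G : Type*} [TopologicalSpace G] [ChartedSpace H G] [Group G] [LieGroup I (⊤ : ℕ∞) G]
    (U : Set G) (hUopen : IsOpen U) (hUconn : IsConnected U) (h1U : (1 : G) ∈ U)
    (z : G) (hz : z ∈ U)
    (a : List G) (ha : ∀ x ∈ a, x ∈ U ∧ x⁻¹ ∈ U) :
    ∃ b : List G, (∀ x ∈ b, x ∈ U ∧ x⁻¹ ∈ U) ∧
      Relation.ReflTransGen (Expands U) (z :: Block a) (Block b ++ [z]) := by
  haveI : IsTopologicalGroup G := topologicalGroup_of_lieGroup I ((⊤ : ℕ∞) : WithTop ℕ∞)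
  -- the symmetric open neighbourhood of 1
  set V : Set G := U ∩ U⁻¹ with hV
  have hVopen : IsOpen V := hUopen.inter hUopen.inv
  have h1V : (1 : G) ∈ V := ⟨h1U, by simpa using h1U⟩
  have hVmem : ∀ v ∈ V, v ∈ U ∧ v⁻¹ ∈ U := fun v hv => ⟨hv.1, hv.2⟩
  have hVsymm : ∀ v ∈ V, v⁻¹ ∈ V := fun v hv => ⟨hv.2, by simpa using hv.1⟩
  -- the set of points that can move past blocks
  set S : Set G := {y | y ∈ U ∧ Moves U y} with hS
  set T : Set G := {y | y ∈ U ∧ ¬ Moves U y} with hT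
  -- basic neighbourhoods
  have hnbhd : ∀ y : G, IsOpen ((· * y) '' V) ∧ y ∈ (· * y) '' V :=
    fun y => ⟨isOpenMap_mul_right y V hVopen, ⟨1, h1V, one_mul y⟩⟩
  have hSopen : IsOpen S := by
    rw [isOpen_iff_forall_mem_open]
    rintro y ⟨hyU, hymoves⟩
    refine ⟨(· * y) '' V ∩ U, ?_, ((hnbhd y).1).inter hUopen, ⟨(hnbhd y).2, hyU⟩⟩
    rintro x ⟨⟨v, hvV, rfl⟩, hxU⟩
    exact ⟨hxU, moves_step hyU (hVmem v hvV).1 (hVmem v hvV).2 hxU hymoves⟩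
  have hTopen : IsOpen T := by
    rw [isOpen_iff_forall_mem_open]
    rintro y ⟨hyU, hymoves⟩
    refine ⟨(· * y) '' V ∩ U, ?_, ((hnbhd y).1).inter hUopen, ⟨(hnbhd y).2, hyU⟩⟩
    rintro x ⟨⟨v, hvV, rfl⟩, hxU⟩
    refine ⟨hxU, fun hmoves => hymoves ?_⟩
    have := moves_step hxU (hVsymm v hvV).1 (by simpa using (hVmem v hvV).1)
      (by simpa [inv_mul_cancel_left] using hyU) hmoves
    simpa [inv_mul_cancel_left] using this
  -- connectedness argument
  have hzS : z ∈ S := by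
    by_contra hzS
    have hUsub : U ⊆ S ∪ T := by
      intro y hy
      by_cases h : Moves U y
      · exact Or.inl ⟨hy, h⟩
      · exact Or.inr ⟨hy, h⟩
    have h1S : (U ∩ S).Nonempty := ⟨1, h1U, h1U, moves_one h1U⟩
    have hzT : (U ∩ T).Nonempty := ⟨z, hz, hz, fun h => hzS ⟨hz, h⟩⟩
    obtain ⟨y, -, ⟨-, hy1⟩, ⟨-, hy2⟩⟩ :=
      hUconn.isPreconnected S T hSopen hTopen hUsub h1S hzT
    exact hy2 hy1
  exact hzS.2 a ha
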